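/- arXiv:2502.00489 — 3 statements merged into one kernel-verified Lean document; each statement's English description precedes it below -/
import Mathlib

section
/- For a uniformly random permutation of [n] and any t ≤ n/2, if X is the number of cycles of length at most t, then Var(X) ≤ E[X]. -/
set_option linter.unusedSectionVars false

open Equiv Function Finset

variable {α : Type*} [Fintype α] [DecidableEq α]

lemma perm_mem_periodicPts (π : Perm α) (x : α) : x ∈ Function.periodicPts ⇑π := by
  refine Function.mk_mem_periodicPts (orderOf_pos π) ?_
  show (⇑π)^[orderOf π] x = x
  rw [← Equiv.Perm.coe_pow, pow_orderOf_eq_one]; rfl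

lemma perm_minPer_pos (π : Perm α) (x : α) : 0 < Function.minimalPeriod ⇑π x :=
  Function.minimalPeriod_pos_of_mem_periodicPts (perm_mem_periodicPts π x)

lemma fin_add_one_val {k : ℕ} (i : Fin (k+1)) :
    ((i + 1 : Fin (k+1)) : ℕ) = ((i : ℕ) + 1) % (k+1) := by
  rw [Fin.add_def, Fin.val_one']
  conv_rhs => rw [Nat.add_mod, Nat.mod_eq_of_lt i.isLt]

/-- Uniqueness of a cyclic parametrization starting at `f 0`. -/
lemma cyclic_eq_iterate (π : Perm α) {k : ℕ} {f : Fin (k+1) ↪ α}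
    (hf : ∀ i, π (f i) = f (i + 1)) :
    ∀ m (hm : m < k + 1), f ⟨m, hm⟩ = (⇑π)^[m] (f 0) := by
  intro m
  induction m with
  | zero => intro hm; rfl
  | succ m ih =>
    intro hm
    have hm' : m < k + 1 := Nat.lt_of_succ_lt hm
    have h1 : ((⟨m, hm'⟩ : Fin (k+1)) + 1) = ⟨m+1, hm⟩ := by
      apply Fin.ext
      rw [fin_add_one_val]
      exact Nat.mod_eq_of_lt hm
    rw [Function.iterate_succ_apply', ← ih hm', ← h1, hf]

lemma cyclic_iterate (π : Perm α) {k : ℕ} {f : Fin (k+1) ↪ α}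
    (hf : ∀ i, π (f i) = f (i + 1)) (hper : Function.minimalPeriod ⇑π (f 0) = k + 1) :
    ∀ m : ℕ, (⇑π)^[m] (f 0) = f ⟨m % (k+1), Nat.mod_lt _ (Nat.succ_pos k)⟩ := by
  intro m
  have hmod := Function.iterate_mod_minimalPeriod_eq (f := ⇑π) (x := f 0) (n := m)
  rw [hper] at hmod
  rw [cyclic_eq_iterate π hf _ (Nat.mod_lt _ (Nat.succ_pos k)), hmod]

lemma minimalPeriod_eq_iff_cyclic (π : Perm α) (x : α) (k : ℕ) :
    Function.minimalPeriod ⇑π x = k + 1 ↔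
      ∃ f : Fin (k+1) ↪ α, f 0 = x ∧ ∀ i, π (f i) = f (i + 1) := by
  constructor
  · intro hp
    have hinj : Function.Injective (fun i : Fin (k+1) => (⇑π)^[(i : ℕ)] x) := by
      intro i j hij
      have := Function.iterate_injOn_Iio_minimalPeriod (f := ⇑π) (x := x)
        (by rw [hp]; exact Set.mem_Iio.2 i.isLt) (by rw [hp]; exact Set.mem_Iio.2 j.isLt) hij
      exact Fin.ext this
    refine ⟨⟨fun i => (⇑π)^[(i : ℕ)] x, hinj⟩, rfl, ?_⟩
    intro i
    show π ((⇑π)^[(i:ℕ)] x) = (⇑π)^[((i+1 : Fin (k+1)) : ℕ)] x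
    have hmod := Function.iterate_mod_minimalPeriod_eq (f := ⇑π) (x := x) (n := (i:ℕ)+1)
    rw [hp] at hmod
    rw [fin_add_one_val, hmod, Function.iterate_succ_apply']
  · rintro ⟨f, hf0, hf⟩
    subst hf0
    have hlast : ((⟨k, Nat.lt_succ_self k⟩ : Fin (k+1)) + 1) = 0 := by
      apply Fin.ext
      rw [fin_add_one_val]
      simp
    have hper : (⇑π)^[k+1] (f 0) = f 0 := by
      rw [Function.iterate_succ_apply', ← cyclic_eq_iterate π hf k (Nat.lt_succ_self k),
        hf, hlast]
    have hPP : Function.IsPeriodicPt ⇑π (k+1) (f 0) := hper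
    have hpos : 0 < Function.minimalPeriod ⇑π (f 0) := perm_minPer_pos π (f 0)
    have hle : Function.minimalPeriod ⇑π (f 0) ≤ k + 1 :=
      hPP.minimalPeriod_le (Nat.succ_pos k)
    by_contra hne
    have hlt : Function.minimalPeriod ⇑π (f 0) < k + 1 := lt_of_le_of_ne hle hne
    have : f ⟨Function.minimalPeriod ⇑π (f 0), hlt⟩ = f 0 := by
      rw [cyclic_eq_iterate π hf _ hlt, Function.iterate_minimalPeriod]
    have := f.injective this
    rw [Fin.ext_iff] at this
    simp at this
    omega
section Glue

variable {k : ℕ} (f : Fin (k+1) ↪ α)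

/-- The equivalence between `Fin (k+1)` and the image finset of `f`. -/
noncomputable def embEquiv : Fin (k+1) ≃ {a : α // a ∈ Finset.univ.map f} :=
  Equiv.ofBijective (fun i => ⟨f i, by simp⟩)
    ⟨fun i j h => f.injective (Subtype.ext_iff.1 h),
     fun ⟨a, ha⟩ => by
      obtain ⟨i, _, hi⟩ := Finset.mem_map.1 ha
      exact ⟨i, Subtype.ext hi⟩⟩

/-- The cyclic permutation on the image of `f`. -/
noncomputable def cycOn : Perm {a : α // a ∈ Finset.univ.map f} :=
  (embEquiv f).permCongr (finRotate (k+1))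

/-- Glue the cycle on the image of `f` with a permutation of the complement. -/
noncomputable def glue (τ : Perm {a : α // ¬ a ∈ Finset.univ.map f}) : Perm α :=
  Equiv.Perm.subtypeCongr (cycOn f) τ

lemma glue_mem (τ : Perm {a : α // ¬ a ∈ Finset.univ.map f}) (i : Fin (k+1)) :
    glue f τ (f i) = f (i + 1) := by
  have h : f i ∈ Finset.univ.map f := by simp
  rw [glue, Equiv.Perm.subtypeCongr.left_apply _ _ h]
  show ((cycOn f ⟨f i, h⟩ : {a : α // a ∈ Finset.univ.map f}) : α) = f (i+1)
  have h1 : (embEquiv f).symm ⟨f i, h⟩ = i := by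
    rw [Equiv.symm_apply_eq]; rfl
  rw [cycOn, Equiv.permCongr_apply, h1, finRotate_succ_apply]
  rfl

lemma glue_not_mem (τ : Perm {a : α // ¬ a ∈ Finset.univ.map f}) (a : α)
    (ha : ¬ a ∈ Finset.univ.map f) :
    glue f τ a = (τ ⟨a, ha⟩ : α) := by
  rw [glue, Equiv.Perm.subtypeCongr.right_apply _ _ ha]

lemma glue_iterate (τ : Perm {a : α // ¬ a ∈ Finset.univ.map f}) (a : α)
    (ha : ¬ a ∈ Finset.univ.map f) (m : ℕ) :
    (⇑(glue f τ))^[m] a = ((⇑τ)^[m] ⟨a, ha⟩ : {a : α // ¬ a ∈ Finset.univ.map f}) := by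
  induction m with
  | zero => rfl
  | succ m ih =>
    rw [Function.iterate_succ_apply', Function.iterate_succ_apply', ih,
      glue_not_mem f τ _ ((⇑τ)^[m] ⟨a, ha⟩).2]

lemma glue_minimalPeriod (τ : Perm {a : α // ¬ a ∈ Finset.univ.map f}) (a : α)
    (ha : ¬ a ∈ Finset.univ.map f) :
    Function.minimalPeriod ⇑(glue f τ) a = Function.minimalPeriod ⇑τ ⟨a, ha⟩ := by
  apply Nat.dvd_antisymm
  · apply Function.IsPeriodicPt.minimalPeriod_dvd
    show (⇑(glue f τ))^[_] a = a
    rw [glue_iterate f τ a ha, Function.iterate_minimalPeriod]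
  · apply Function.IsPeriodicPt.minimalPeriod_dvd
    show (⇑τ)^[_] ⟨a, ha⟩ = ⟨a, ha⟩
    apply Subtype.ext
    show (((⇑τ)^[_] ⟨a, ha⟩ : {a : α // ¬ a ∈ Finset.univ.map f}) : α) = a
    rw [← glue_iterate f τ a ha, Function.iterate_minimalPeriod]

lemma glue_inj (τ τ' : Perm {a : α // ¬ a ∈ Finset.univ.map f})
    (h : glue f τ = glue f τ') : τ = τ' := by
  ext ⟨a, ha⟩
  have := congrArg (fun σ : Perm α => σ a) h
  simp only [glue_not_mem f _ a ha] at this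
  exact this

lemma cyclic_invariant {π : Perm α} (hπ : ∀ i, π (f i) = f (i + 1)) (a : α) :
    π a ∈ Finset.univ.map f ↔ a ∈ Finset.univ.map f := by
  constructor
  · intro h
    obtain ⟨j, _, hj⟩ := Finset.mem_map.1 h
    have : π (f (j - 1)) = f j := by rw [hπ, sub_add_cancel]
    have : a = f (j - 1) := π.injective (by rw [this, hj])
    rw [this]; simp
  · intro h
    obtain ⟨i, _, hi⟩ := Finset.mem_map.1 h
    rw [← hi, hπ]; simp

lemma glue_surj {π : Perm α} (hπ : ∀ i, π (f i) = f (i + 1)) :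
    ∃ τ, glue f τ = π := by
  refine ⟨π.subtypePerm (p := fun a => ¬ a ∈ Finset.univ.map f)
    (fun a => not_congr (cyclic_invariant f hπ a)), ?_⟩
  ext a
  by_cases ha : a ∈ Finset.univ.map f
  · obtain ⟨i, _, hi⟩ := Finset.mem_map.1 ha
    rw [← hi, glue_mem, hπ]
  · rw [glue_not_mem f _ a ha]
    rfl

end Glue
section Count

variable {k : ℕ}

lemma card_cyclic_filter (f : Fin (k+1) ↪ α) (P : Perm α → Prop)
    (Q : Perm {a : α // ¬ a ∈ Finset.univ.map f} → Prop) [DecidablePred P] [DecidablePred Q]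
    (hPQ : ∀ τ, P (glue f τ) ↔ Q τ) :
    (Finset.univ.filter (fun π : Perm α => (∀ i, π (f i) = f (i + 1)) ∧ P π)).card
      = (Finset.univ.filter Q).card := by
  classical
  refine Finset.card_bij'
    (fun π hπ => Classical.choose (glue_surj f (Finset.mem_filter.1 hπ).2.1))
    (fun τ _ => glue f τ) ?_ ?_ ?_ ?_
  · intro π hπ
    obtain ⟨-, hcyc, hP⟩ := Finset.mem_filter.1 hπ
    have hspec := Classical.choose_spec (glue_surj f hcyc)
    rw [Finset.mem_filter]
    exact ⟨Finset.mem_univ _, (hPQ _).1 (by rw [hspec]; exact hP)⟩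
  · intro τ hτ
    rw [Finset.mem_filter]
    exact ⟨Finset.mem_univ _, glue_mem f τ, (hPQ τ).2 (Finset.mem_filter.1 hτ).2⟩
  · intro π hπ
    exact Classical.choose_spec (glue_surj f (Finset.mem_filter.1 hπ).2.1)
  · intro τ hτ
    apply glue_inj f
    exact Classical.choose_spec (glue_surj f (glue_mem f τ))

lemma card_compl_map (f : Fin (k+1) ↪ α) :
    Fintype.card {a : α // ¬ a ∈ Finset.univ.map f} = Fintype.card α - (k+1) := by
  classical
  rw [Fintype.card_subtype]
  have : Finset.univ.filter (fun a : α => ¬ a ∈ Finset.univ.map f) = (Finset.univ.map f)ᶜ := by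
    ext a; simp
  rw [this, Finset.card_compl, Finset.card_map, Finset.card_univ, Fintype.card_fin]

lemma card_cyclic (f : Fin (k+1) ↪ α) :
    (Finset.univ.filter (fun π : Perm α => ∀ i, π (f i) = f (i + 1))).card
      = (Fintype.card α - (k+1)).factorial := by
  classical
  have h := card_cyclic_filter f (fun _ => True) (fun _ => True) (fun _ => Iff.rfl)
  simp only [and_true, Finset.filter_true] at h
  rw [h, Finset.card_univ, Fintype.card_perm, card_compl_map f]

lemma card_cyclic_marked (f : Fin (k+1) ↪ α) (y : α) (hy : ¬ y ∈ Finset.univ.map f) (m : ℕ) :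
    (Finset.univ.filter (fun π : Perm α =>
        (∀ i, π (f i) = f (i + 1)) ∧ Function.minimalPeriod ⇑π y = m)).card
      = (Finset.univ.filter (fun τ : Perm {a : α // ¬ a ∈ Finset.univ.map f} =>
          Function.minimalPeriod ⇑τ ⟨y, hy⟩ = m)).card := by
  classical
  exact card_cyclic_filter f _ _ (fun τ => by rw [glue_minimalPeriod f τ y hy])

end Count
section EmbCount

lemma card_emb (x : α) (s : Finset α) (hx : ¬ x ∈ s) (k : ℕ) :
    (Finset.univ.filter (fun f : Fin (k+1) ↪ α => f 0 = x ∧ ∀ i, ¬ f i ∈ s)).card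
      = (Fintype.card α - 1 - s.card).descFactorial k := by
  classical
  have hcard : (Finset.univ : Finset (Fin k ↪ {a : α // a ≠ x ∧ ¬ a ∈ s})).card
      = (Fintype.card α - 1 - s.card).descFactorial k := by
    rw [Finset.card_univ, Fintype.card_embedding_eq, Fintype.card_fin]
    congr 1
    rw [Fintype.card_subtype]
    have : Finset.univ.filter (fun a : α => a ≠ x ∧ ¬ a ∈ s) = (insert x s)ᶜ := by
      ext a; simp [not_or]
    rw [this, Finset.card_compl, Finset.card_insert_of_notMem hx]
    omega
  rw [← hcard]
  refine Finset.card_bij'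
    (fun f hf => ⟨fun j => ⟨f j.succ,
      fun h => Fin.succ_ne_zero j (f.injective (h.trans (Finset.mem_filter.1 hf).2.1.symm)),
      (Finset.mem_filter.1 hf).2.2 j.succ⟩,
      fun a b hab => Fin.succ_injective _ (f.injective (Subtype.ext_iff.1 hab))⟩)
    (fun g _ => ⟨fun i => Fin.cases x (fun j => ((g j : {a : α // a ≠ x ∧ ¬ a ∈ s}) : α)) i, ?_⟩)
    (fun f hf => Finset.mem_univ _) ?_ ?_ ?_
  · intro a b hab
    induction a using Fin.cases with
    | zero =>
      induction b using Fin.cases with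
      | zero => rfl
      | succ jb =>
        simp only [Fin.cases_zero, Fin.cases_succ] at hab
        exact absurd hab.symm (g jb).2.1
    | succ ja =>
      induction b using Fin.cases with
      | zero =>
        simp only [Fin.cases_zero, Fin.cases_succ] at hab
        exact absurd hab (g ja).2.1
      | succ jb =>
        simp only [Fin.cases_succ] at hab
        exact congrArg Fin.succ (g.injective (Subtype.ext hab))
  · intro g _
    rw [Finset.mem_filter]
    refine ⟨Finset.mem_univ _, rfl, ?_⟩
    intro i
    induction i using Fin.cases with
    | zero => exact hx
    | succ j =>
      show ¬ ((g j : {a : α // a ≠ x ∧ ¬ a ∈ s}) : α) ∈ s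
      exact (g j).2.2
  · intro f hf
    apply DFunLike.ext
    intro i
    induction i using Fin.cases with
    | zero => exact ((Finset.mem_filter.1 hf).2.1).symm
    | succ j => rfl
  · intro g hg
    apply DFunLike.ext
    intro j
    apply Subtype.ext
    rfl

end EmbCount
section MainCount

lemma sameCycle_iff_iterate (π : Perm α) (x y : α) :
    π.SameCycle x y ↔ ∃ m : ℕ, (⇑π)^[m] x = y := by
  constructor
  · intro h
    obtain ⟨i, _, hi⟩ := h.exists_pow_eq'
    exact ⟨i, by rw [← hi]; rfl⟩
  · rintro ⟨m, hm⟩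
    exact ⟨(m : ℤ), by rw [zpow_natCast, ← hm]; rfl⟩

/-- The orbit finset determined by a cyclic parametrization is unique. -/
lemma cyclic_ext {k : ℕ} (π : Perm α) {f g : Fin (k+1) ↪ α}
    (hf : ∀ i, π (f i) = f (i + 1)) (hg : ∀ i, π (g i) = g (i + 1))
    (h0 : f 0 = g 0) : f = g := by
  apply DFunLike.ext
  intro i
  have h1 := cyclic_eq_iterate π hf i.val i.isLt
  have h2 := cyclic_eq_iterate π hg i.val i.isLt
  rw [Fin.eta] at h1 h2
  rw [h1, h2, h0]

lemma card_minPeriod (x : α) (k : ℕ) (hk : k + 1 ≤ Fintype.card α) :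
    (Finset.univ.filter (fun π : Perm α => Function.minimalPeriod ⇑π x = k + 1)).card
      = (Fintype.card α - 1).factorial := by
  classical
  have hbi : Finset.univ.filter (fun π : Perm α => Function.minimalPeriod ⇑π x = k + 1)
      = (Finset.univ.filter (fun f : Fin (k+1) ↪ α => f 0 = x)).biUnion
          (fun f => Finset.univ.filter (fun π : Perm α => ∀ i, π (f i) = f (i + 1))) := by
    ext π
    simp only [Finset.mem_biUnion, Finset.mem_filter, Finset.mem_univ, true_and]
    constructor
    · intro hπ
      obtain ⟨f, hf0, hf⟩ := (minimalPeriod_eq_iff_cyclic π x k).1 hπ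
      exact ⟨f, hf0, hf⟩
    · rintro ⟨f, hf0, hf⟩
      exact (minimalPeriod_eq_iff_cyclic π x k).2 ⟨f, hf0, hf⟩
  rw [hbi, Finset.card_biUnion]
  · have hconst : ∀ f ∈ Finset.univ.filter (fun f : Fin (k+1) ↪ α => f 0 = x),
        (Finset.univ.filter (fun π : Perm α => ∀ i, π (f i) = f (i + 1))).card
          = (Fintype.card α - (k+1)).factorial := fun f _ => card_cyclic f
    rw [Finset.sum_congr rfl hconst, Finset.sum_const, smul_eq_mul]
    have hF : (Finset.univ.filter (fun f : Fin (k+1) ↪ α => f 0 = x)).card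
        = (Fintype.card α - 1).descFactorial k := by
      have := card_emb x ∅ (by simp) k
      simp only [Finset.notMem_empty, not_false_iff, and_true, Finset.card_empty,
        Nat.sub_zero, forall_const] at this
      rw [← this]
    rw [hF]
    have h1 : Fintype.card α - (k+1) = (Fintype.card α - 1) - k := by omega
    rw [h1, mul_comm, Nat.factorial_mul_descFactorial (by omega : k ≤ Fintype.card α - 1)]
  · intro f hf g hg hfg
    simp only [Finset.disjoint_left, Finset.mem_filter, Finset.mem_univ, true_and]
    intro π hπf hπg
    exact hfg (cyclic_ext π hπf hπg (by
      rw [(Finset.mem_filter.1 hf).2, (Finset.mem_filter.1 hg).2]))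

lemma card_pair (x y : α) (hxy : x ≠ y) (k k' : ℕ)
    (h : (k+1) + (k'+1) ≤ Fintype.card α) :
    (Finset.univ.filter (fun π : Perm α => ¬π.SameCycle x y ∧
        Function.minimalPeriod ⇑π x = k + 1 ∧ Function.minimalPeriod ⇑π y = k' + 1)).card
      = (Fintype.card α - 2).factorial := by
  classical
  have hbi : Finset.univ.filter (fun π : Perm α => ¬π.SameCycle x y ∧
        Function.minimalPeriod ⇑π x = k + 1 ∧ Function.minimalPeriod ⇑π y = k' + 1)
      = (Finset.univ.filter (fun f : Fin (k+1) ↪ α => f 0 = x ∧ ∀ i, ¬ f i ∈ ({y} : Finset α))).biUnion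
          (fun f => Finset.univ.filter (fun π : Perm α =>
            (∀ i, π (f i) = f (i + 1)) ∧ Function.minimalPeriod ⇑π y = k' + 1)) := by
    ext π
    simp only [Finset.mem_biUnion, Finset.mem_filter, Finset.mem_univ, true_and,
      Finset.mem_singleton]
    constructor
    · rintro ⟨hsc, hx, hy⟩
      obtain ⟨f, hf0, hf⟩ := (minimalPeriod_eq_iff_cyclic π x k).1 hx
      refine ⟨f, ⟨hf0, ?_⟩, hf, hy⟩
      intro i hi
      apply hsc
      rw [sameCycle_iff_iterate]
      refine ⟨i.val, ?_⟩
      rw [← hf0, ← cyclic_eq_iterate π hf i.val i.isLt, Fin.eta, hi]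
    · rintro ⟨f, ⟨hf0, hfy⟩, hf, hy⟩
      have hx : Function.minimalPeriod ⇑π x = k + 1 :=
        (minimalPeriod_eq_iff_cyclic π x k).2 ⟨f, hf0, hf⟩
      refine ⟨?_, hx, hy⟩
      intro hsc
      obtain ⟨m, hm⟩ := (sameCycle_iff_iterate π x y).1 hsc
      have hper : Function.minimalPeriod ⇑π (f 0) = k + 1 := by rw [hf0]; exact hx
      have := cyclic_iterate π hf hper m
      rw [hf0, hm] at this
      exact hfy _ this.symm
  rw [hbi, Finset.card_biUnion]
  · have hconst : ∀ f ∈ Finset.univ.filter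
        (fun f : Fin (k+1) ↪ α => f 0 = x ∧ ∀ i, ¬ f i ∈ ({y} : Finset α)),
        (Finset.univ.filter (fun π : Perm α =>
            (∀ i, π (f i) = f (i + 1)) ∧ Function.minimalPeriod ⇑π y = k' + 1)).card
          = (Fintype.card α - (k+1) - 1).factorial := by
      intro f hf
      have hfy := (Finset.mem_filter.1 hf).2.2
      have hy : ¬ y ∈ Finset.univ.map f := by
        intro hy
        obtain ⟨i, _, hi⟩ := Finset.mem_map.1 hy
        exact hfy i (by simp [hi])
      rw [card_cyclic_marked f y hy (k'+1)]
      have hk' : k' + 1 ≤ Fintype.card {a : α // ¬ a ∈ Finset.univ.map f} := by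
        rw [card_compl_map f]; omega
      rw [card_minPeriod (⟨y, hy⟩ : {a : α // ¬ a ∈ Finset.univ.map f}) k' hk',
        card_compl_map f]
    rw [Finset.sum_congr rfl hconst, Finset.sum_const, smul_eq_mul]
    rw [card_emb x {y} (by simp [hxy]) k]
    have h1 : Fintype.card α - (k+1) - 1 = (Fintype.card α - 1 - 1) - k := by omega
    have h2 : Fintype.card α - 1 - ({y} : Finset α).card = Fintype.card α - 1 - 1 := by
      simp
    rw [h1, h2, mul_comm,
      Nat.factorial_mul_descFactorial (by omega : k ≤ Fintype.card α - 1 - 1)]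
    congr 1
  · intro f hf g hg hfg
    simp only [Finset.disjoint_left, Finset.mem_filter, Finset.mem_univ, true_and]
    intro π hπf hπg
    exact hfg (cyclic_ext π hπf.1 hπg.1 (by
      rw [(Finset.mem_filter.1 hf).2.1, (Finset.mem_filter.1 hg).2.1]))

end MainCount
section Orbits

lemma sameCycle_minPer (π : Perm α) {x y : α} (h : π.SameCycle x y) :
    Function.minimalPeriod ⇑π x = Function.minimalPeriod ⇑π y := by
  obtain ⟨m, hm⟩ := (sameCycle_iff_iterate π x y).1 h
  rw [← hm, Function.minimalPeriod_apply_iterate (perm_mem_periodicPts π x) m]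

lemma card_orbit (π : Perm α) (x : α) :
    (Finset.univ.filter (fun y : α => π.SameCycle x y)).card
      = Function.minimalPeriod ⇑π x := by
  classical
  have himg : Finset.univ.filter (fun y : α => π.SameCycle x y)
      = (Finset.range (Function.minimalPeriod ⇑π x)).image (fun m => (⇑π)^[m] x) := by
    ext z
    simp only [Finset.mem_filter, Finset.mem_univ, true_and, Finset.mem_image,
      Finset.mem_range]
    constructor
    · intro h
      obtain ⟨m, hm⟩ := (sameCycle_iff_iterate π x z).1 h
      exact ⟨m % Function.minimalPeriod ⇑π x,
        Nat.mod_lt _ (perm_minPer_pos π x),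
        by rw [Function.iterate_mod_minimalPeriod_eq, hm]⟩
    · rintro ⟨m, _, hm⟩
      exact (sameCycle_iff_iterate π x z).2 ⟨m, hm⟩
  rw [himg, Finset.card_image_of_injOn, Finset.card_range]
  rw [Finset.coe_range]
  exact Function.iterate_injOn_Iio_minimalPeriod

end Orbits
open Classical in
/-- The number of cycles (orbits) of `π` of size at most `t`, counted as the number
of distinct orbits `{y | π.SameCycle x y}` over elements `x` of minimal period `≤ t`. -/
noncomputable def orbitCountLe (n t : ℕ) (π : Equiv.Perm (Fin n)) : ℕ :=
  ((Finset.univ.filter (fun x : Fin n => Function.minimalPeriod (⇑π) x ≤ t)).image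
    (fun x => Finset.univ.filter (fun y : Fin n => π.SameCycle x y))).card

lemma orbitCountLe_cast (n t : ℕ) (π : Equiv.Perm (Fin n)) :
    (orbitCountLe n t π : ℚ)
      = ∑ x : Fin n, (if Function.minimalPeriod (⇑π) x ≤ t
          then ((Function.minimalPeriod (⇑π) x : ℚ))⁻¹ else 0) := by
  classical
  rw [← Finset.sum_filter]
  set p : Fin n → ℕ := fun x => Function.minimalPeriod (⇑π) x with hp
  set s : Finset (Fin n) := Finset.univ.filter (fun x : Fin n => p x ≤ t) with hs
  set F : Fin n → Finset (Fin n) :=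
    fun x => Finset.univ.filter (fun y : Fin n => π.SameCycle x y) with hF
  have hmaps : ∀ x ∈ s, F x ∈ s.image F := fun x hx => Finset.mem_image_of_mem F hx
  rw [← Finset.sum_fiberwise_of_maps_to hmaps (fun x => ((p x : ℚ))⁻¹)]
  have : orbitCountLe n t π = (s.image F).card := rfl
  rw [this, Finset.card_eq_sum_ones, Nat.cast_sum]
  apply Finset.sum_congr rfl
  intro y hy
  obtain ⟨x₀, hx₀s, hx₀⟩ := Finset.mem_image.1 hy
  have hfib : s.filter (fun x => F x = y) = F x₀ := by
    ext z
    simp only [Finset.mem_filter, hs, Finset.mem_univ, true_and, hF]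
    constructor
    · rintro ⟨_, hFz⟩
      have hz : z ∈ Finset.univ.filter (fun w : Fin n => π.SameCycle z w) :=
        Finset.mem_filter.2 ⟨Finset.mem_univ z, Equiv.Perm.SameCycle.refl π z⟩
      rw [← hx₀] at hFz
      rw [hFz] at hz
      exact (Finset.mem_filter.1 hz).2
    · intro hsc
      have hpz : p z = p x₀ := (sameCycle_minPer π hsc).symm
      have hx₀mem := Finset.mem_filter.1 hx₀s
      constructor
      · rw [hpz]; exact hx₀mem.2
      · rw [← hx₀]
        ext w
        simp only [hF, Finset.mem_filter, Finset.mem_univ, true_and]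
        exact ⟨fun h => hsc.trans h, fun h => hsc.symm.trans h⟩
  rw [hfib]
  have hcardF : (F x₀).card = p x₀ := card_orbit π x₀
  have hconst : ∀ z ∈ F x₀, ((p z : ℚ))⁻¹ = ((p x₀ : ℚ))⁻¹ := by
    intro z hz
    have hsc : π.SameCycle x₀ z := (Finset.mem_filter.1 hz).2
    show ((Function.minimalPeriod (⇑π) z : ℚ))⁻¹ = ((Function.minimalPeriod (⇑π) x₀ : ℚ))⁻¹
    rw [sameCycle_minPer π hsc]
  rw [Finset.sum_congr rfl hconst, Finset.sum_const, hcardF, nsmul_eq_mul, Nat.cast_one]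
  have hne : ((p x₀ : ℚ)) ≠ 0 := by
    have := perm_minPer_pos π x₀
    positivity
  field_simp
lemma minPer_trivial_of_t_zero (n : ℕ) (π : Equiv.Perm (Fin n)) (x : Fin n) :
    ¬ Function.minimalPeriod (⇑π) x ≤ 0 := by
  have := perm_minPer_pos π x
  omega

lemma sumInnerOne (n t : ℕ) (ht : t ≤ n) (x : Fin n) :
    ∑ π : Equiv.Perm (Fin n), (if Function.minimalPeriod (⇑π) x ≤ t
        then ((Function.minimalPeriod (⇑π) x : ℚ))⁻¹ else 0)
      = ∑ ℓ ∈ Finset.Icc 1 t, ((n - 1).factorial : ℚ) * ((ℓ : ℚ))⁻¹ := by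
  classical
  rw [← Finset.sum_filter]
  set p : Equiv.Perm (Fin n) → ℕ := fun π => Function.minimalPeriod (⇑π) x with hp
  have hmaps : ∀ π ∈ Finset.univ.filter (fun π : Equiv.Perm (Fin n) => p π ≤ t),
      p π ∈ Finset.Icc 1 t := by
    intro π hπ
    rw [Finset.mem_Icc]
    exact ⟨perm_minPer_pos π x, (Finset.mem_filter.1 hπ).2⟩
  rw [← Finset.sum_fiberwise_of_maps_to hmaps (fun π => ((p π : ℚ))⁻¹)]
  apply Finset.sum_congr rfl
  intro ℓ hℓ
  rw [Finset.mem_Icc] at hℓ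
  have hfilter : (Finset.univ.filter (fun π : Equiv.Perm (Fin n) => p π ≤ t)).filter
      (fun π => p π = ℓ) = Finset.univ.filter (fun π : Equiv.Perm (Fin n) => p π = ℓ) := by
    rw [Finset.filter_filter]
    apply Finset.filter_congr
    intro π _
    constructor
    · rintro ⟨_, h2⟩; exact h2
    · intro h2; exact ⟨by omega, h2⟩
  have hterm : ∀ π ∈ (Finset.univ.filter (fun π : Equiv.Perm (Fin n) => p π ≤ t)).filter
      (fun π => p π = ℓ), ((p π : ℚ))⁻¹ = ((ℓ : ℚ))⁻¹ := by
    intro π hπ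
    rw [(Finset.mem_filter.1 hπ).2]
  rw [Finset.sum_congr rfl hterm, Finset.sum_const, hfilter]
  have hcard : (Finset.univ.filter (fun π : Equiv.Perm (Fin n) => p π = ℓ)).card
      = (n - 1).factorial := by
    obtain ⟨k, rfl⟩ : ∃ k, ℓ = k + 1 := ⟨ℓ - 1, by omega⟩
    have := card_minPeriod (α := Fin n) x k (by rw [Fintype.card_fin]; omega)
    rw [Fintype.card_fin] at this
    exact this
  rw [hcard, nsmul_eq_mul]

lemma sum1 (n t : ℕ) (ht2 : 2 * t ≤ n) :
    ∑ π : Equiv.Perm (Fin n), (orbitCountLe n t π : ℚ)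
      = (n.factorial : ℚ) * ∑ ℓ ∈ Finset.Icc 1 t, ((ℓ : ℚ))⁻¹ := by
  classical
  simp only [orbitCountLe_cast]
  rw [Finset.sum_comm]
  rcases Nat.eq_zero_or_pos t with ht0 | ht0
  · subst ht0
    have hz : ∀ (π : Equiv.Perm (Fin n)) (x : Fin n),
        ¬ Function.minimalPeriod (⇑π) x = 0 := by
      intro π x; have := perm_minPer_pos π x; omega
    simp [hz]
  have hn : 1 ≤ n := by omega
  have : ∀ x : Fin n, ∑ π : Equiv.Perm (Fin n),
      (if Function.minimalPeriod (⇑π) x ≤ t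
        then ((Function.minimalPeriod (⇑π) x : ℚ))⁻¹ else 0)
      = ∑ ℓ ∈ Finset.Icc 1 t, ((n - 1).factorial : ℚ) * ((ℓ : ℚ))⁻¹ :=
    fun x => sumInnerOne n t (by omega) x
  rw [Finset.sum_congr rfl (fun x _ => this x), Finset.sum_const, Finset.card_univ,
    Fintype.card_fin, nsmul_eq_mul, ← Finset.mul_sum, ← mul_assoc]
  congr 1
  rw [← Nat.cast_mul, Nat.mul_factorial_pred (by omega)]
lemma sumInnerTwo (n t : ℕ) (ht2 : 2 * t ≤ n) (x y : Fin n) (hxy : x ≠ y) :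
    ∑ π : Equiv.Perm (Fin n),
        (if ¬π.SameCycle x y
          then (if Function.minimalPeriod (⇑π) x ≤ t
                  then ((Function.minimalPeriod (⇑π) x : ℚ))⁻¹ else 0)
              * (if Function.minimalPeriod (⇑π) y ≤ t
                  then ((Function.minimalPeriod (⇑π) y : ℚ))⁻¹ else 0)
          else 0)
      = ((n - 2).factorial : ℚ) * (∑ ℓ ∈ Finset.Icc 1 t, ((ℓ : ℚ))⁻¹)^2 := by
  classical
  set p : Equiv.Perm (Fin n) → Fin n → ℕ := fun π z => Function.minimalPeriod (⇑π) z with hp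
  have hstep : ∀ π : Equiv.Perm (Fin n),
      (if ¬π.SameCycle x y
        then (if p π x ≤ t then ((p π x : ℚ))⁻¹ else 0)
            * (if p π y ≤ t then ((p π y : ℚ))⁻¹ else 0)
        else 0)
      = (if ¬π.SameCycle x y ∧ p π x ≤ t ∧ p π y ≤ t
          then ((p π x : ℚ))⁻¹ * ((p π y : ℚ))⁻¹ else 0) := by
    intro π
    by_cases h1 : π.SameCycle x y <;> by_cases h2 : p π x ≤ t <;>
      by_cases h3 : p π y ≤ t <;> simp [h1, h2, h3]
  rw [Finset.sum_congr rfl (fun π _ => hstep π), ← Finset.sum_filter]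
  set A := Finset.univ.filter
    (fun π : Equiv.Perm (Fin n) => ¬π.SameCycle x y ∧ p π x ≤ t ∧ p π y ≤ t) with hA
  have hmaps : ∀ π ∈ A, (p π x, p π y) ∈ Finset.Icc 1 t ×ˢ Finset.Icc 1 t := by
    intro π hπ
    obtain ⟨-, -, h2, h3⟩ : π ∈ Finset.univ ∧ ¬π.SameCycle x y ∧ p π x ≤ t ∧ p π y ≤ t := by
      simpa [hA] using hπ
    rw [Finset.mem_product, Finset.mem_Icc, Finset.mem_Icc]
    exact ⟨⟨perm_minPer_pos π x, h2⟩, ⟨perm_minPer_pos π y, h3⟩⟩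
  rw [← Finset.sum_fiberwise_of_maps_to hmaps (fun π => ((p π x : ℚ))⁻¹ * ((p π y : ℚ))⁻¹)]
  have hfib : ∀ q ∈ Finset.Icc 1 t ×ˢ Finset.Icc 1 t,
      ∑ π ∈ A.filter (fun π => (p π x, p π y) = q), ((p π x : ℚ))⁻¹ * ((p π y : ℚ))⁻¹
        = ((n - 2).factorial : ℚ) * ((q.1 : ℚ))⁻¹ * ((q.2 : ℚ))⁻¹ := by
    rintro ⟨ℓ, ℓ'⟩ hq
    rw [Finset.mem_product, Finset.mem_Icc, Finset.mem_Icc] at hq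
    obtain ⟨⟨hℓ1, hℓt⟩, hℓ'1, hℓ't⟩ := hq
    have hterm : ∀ π ∈ A.filter (fun π => (p π x, p π y) = (ℓ, ℓ')),
        ((p π x : ℚ))⁻¹ * ((p π y : ℚ))⁻¹ = ((ℓ : ℚ))⁻¹ * ((ℓ' : ℚ))⁻¹ := by
      intro π hπ
      have h := (Finset.mem_filter.1 hπ).2
      rw [Prod.mk.injEq] at h
      rw [h.1, h.2]
    rw [Finset.sum_congr rfl hterm, Finset.sum_const]
    have hset : A.filter (fun π => (p π x, p π y) = (ℓ, ℓ'))
        = Finset.univ.filter (fun π : Equiv.Perm (Fin n) =>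
            ¬π.SameCycle x y ∧ p π x = ℓ ∧ p π y = ℓ') := by
      rw [hA, Finset.filter_filter]
      apply Finset.filter_congr
      intro π _
      rw [Prod.mk.injEq]
      constructor
      · rintro ⟨⟨hsc, -, -⟩, h1, h2⟩; exact ⟨hsc, h1, h2⟩
      · rintro ⟨hsc, h1, h2⟩; exact ⟨⟨hsc, by omega, by omega⟩, h1, h2⟩
    rw [hset]
    have hcard := card_pair (α := Fin n) x y hxy (ℓ - 1) (ℓ' - 1)
      (by rw [Fintype.card_fin]; omega)
    rw [Fintype.card_fin] at hcard
    have hℓeq : ℓ - 1 + 1 = ℓ := by omega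
    have hℓ'eq : ℓ' - 1 + 1 = ℓ' := by omega
    rw [hℓeq, hℓ'eq] at hcard
    rw [hcard, nsmul_eq_mul, mul_assoc]
  rw [Finset.sum_congr rfl hfib, Finset.sum_product]
  rw [sq, Finset.sum_mul_sum]
  rw [Finset.mul_sum]
  apply Finset.sum_congr rfl
  intro ℓ _
  rw [Finset.mul_sum]
  apply Finset.sum_congr rfl
  intro ℓ' _
  show ((n - 2).factorial : ℚ) * ((ℓ : ℚ))⁻¹ * ((ℓ' : ℚ))⁻¹
      = ((n - 2).factorial : ℚ) * (((ℓ : ℚ))⁻¹ * ((ℓ' : ℚ))⁻¹)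
  ring
lemma square_decomp (n t : ℕ) (π : Equiv.Perm (Fin n)) :
    (∑ x : Fin n, (if Function.minimalPeriod (⇑π) x ≤ t
        then ((Function.minimalPeriod (⇑π) x : ℚ))⁻¹ else 0))^2
      = (∑ x : Fin n, (if Function.minimalPeriod (⇑π) x ≤ t
          then ((Function.minimalPeriod (⇑π) x : ℚ))⁻¹ else 0))
        + ∑ x : Fin n, ∑ y : Fin n,
            (if ¬π.SameCycle x y
              then (if Function.minimalPeriod (⇑π) x ≤ t
                      then ((Function.minimalPeriod (⇑π) x : ℚ))⁻¹ else 0)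
                  * (if Function.minimalPeriod (⇑π) y ≤ t
                      then ((Function.minimalPeriod (⇑π) y : ℚ))⁻¹ else 0)
              else 0) := by
  classical
  set h : Fin n → ℚ := fun z => (if Function.minimalPeriod (⇑π) z ≤ t
    then ((Function.minimalPeriod (⇑π) z : ℚ))⁻¹ else 0) with hh
  rw [sq, Finset.sum_mul_sum]
  have hsplit : ∀ x : Fin n, ∑ y : Fin n, h x * h y
      = (∑ y : Fin n, (if π.SameCycle x y then h x * h y else 0))
        + ∑ y : Fin n, (if ¬π.SameCycle x y then h x * h y else 0) := by
    intro x
    rw [← Finset.sum_add_distrib]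
    apply Finset.sum_congr rfl
    intro y _
    by_cases hsc : π.SameCycle x y <;> simp [hsc]
  rw [Finset.sum_congr rfl (fun x _ => hsplit x), Finset.sum_add_distrib]
  congr 1
  apply Finset.sum_congr rfl
  intro x _
  rw [← Finset.sum_filter, ← Finset.mul_sum]
  have hconst : ∀ y ∈ Finset.univ.filter (fun y : Fin n => π.SameCycle x y), h y = h x := by
    intro y hy
    have hsc := (Finset.mem_filter.1 hy).2
    rw [hh]
    simp only []
    rw [sameCycle_minPer π hsc]
  rw [Finset.sum_congr rfl hconst, Finset.sum_const, card_orbit π x, nsmul_eq_mul]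
  by_cases hxt : Function.minimalPeriod (⇑π) x ≤ t
  · have hne : ((Function.minimalPeriod (⇑π) x : ℚ)) ≠ 0 := by
      have := perm_minPer_pos π x
      positivity
    rw [hh]
    simp only [hxt, if_true]
    rw [mul_inv_cancel₀ hne, mul_one]
  · rw [hh]
    simp only [hxt, if_false]
    ring

lemma sum2 (n t : ℕ) (ht2 : 2 * t ≤ n) :
    ∑ π : Equiv.Perm (Fin n), (orbitCountLe n t π : ℚ)^2
      = (n.factorial : ℚ) * (∑ ℓ ∈ Finset.Icc 1 t, ((ℓ : ℚ))⁻¹)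
        + (n.factorial : ℚ) * (∑ ℓ ∈ Finset.Icc 1 t, ((ℓ : ℚ))⁻¹)^2 := by
  classical
  rcases Nat.eq_zero_or_pos t with ht0 | ht0
  · subst ht0
    have hz : ∀ (π : Equiv.Perm (Fin n)) (x : Fin n),
        ¬ Function.minimalPeriod (⇑π) x = 0 := by
      intro π x; have := perm_minPer_pos π x; omega
    simp [orbitCountLe_cast, hz]
  have hn : 2 ≤ n := by omega
  simp only [orbitCountLe_cast]
  rw [Finset.sum_congr rfl (fun π _ => square_decomp n t π), Finset.sum_add_distrib]
  congr 1
  · rw [Finset.sum_congr rfl (fun π _ => (orbitCountLe_cast n t π).symm)]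
    exact sum1 n t ht2
  rw [Finset.sum_comm]
  have hswap : ∀ x : Fin n, ∑ π : Equiv.Perm (Fin n), ∑ y : Fin n,
      (if ¬π.SameCycle x y
        then (if Function.minimalPeriod (⇑π) x ≤ t
                then ((Function.minimalPeriod (⇑π) x : ℚ))⁻¹ else 0)
            * (if Function.minimalPeriod (⇑π) y ≤ t
                then ((Function.minimalPeriod (⇑π) y : ℚ))⁻¹ else 0)
        else 0)
      = ∑ y : Fin n, ∑ π : Equiv.Perm (Fin n),
      (if ¬π.SameCycle x y
        then (if Function.minimalPeriod (⇑π) x ≤ t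
                then ((Function.minimalPeriod (⇑π) x : ℚ))⁻¹ else 0)
            * (if Function.minimalPeriod (⇑π) y ≤ t
                then ((Function.minimalPeriod (⇑π) y : ℚ))⁻¹ else 0)
        else 0) := fun x => Finset.sum_comm
  rw [Finset.sum_congr rfl (fun x _ => hswap x)]
  have hinner : ∀ x : Fin n, ∑ y : Fin n, ∑ π : Equiv.Perm (Fin n),
      (if ¬π.SameCycle x y
        then (if Function.minimalPeriod (⇑π) x ≤ t
                then ((Function.minimalPeriod (⇑π) x : ℚ))⁻¹ else 0)
            * (if Function.minimalPeriod (⇑π) y ≤ t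
                then ((Function.minimalPeriod (⇑π) y : ℚ))⁻¹ else 0)
        else 0)
      = ((n - 1 : ℕ) : ℚ) * (((n - 2).factorial : ℚ)
          * (∑ ℓ ∈ Finset.Icc 1 t, ((ℓ : ℚ))⁻¹)^2) := by
    intro x
    rw [← Finset.sum_erase_add _ _ (Finset.mem_univ x)]
    have hdiag : ∑ π : Equiv.Perm (Fin n),
        (if ¬π.SameCycle x x
          then (if Function.minimalPeriod (⇑π) x ≤ t
                  then ((Function.minimalPeriod (⇑π) x : ℚ))⁻¹ else 0)
              * (if Function.minimalPeriod (⇑π) x ≤ t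
                  then ((Function.minimalPeriod (⇑π) x : ℚ))⁻¹ else 0)
          else 0) = 0 := by
      apply Finset.sum_eq_zero
      intro π _
      simp [Equiv.Perm.SameCycle.refl π x]
    rw [hdiag, add_zero]
    have hoff : ∀ y ∈ Finset.univ.erase x, ∑ π : Equiv.Perm (Fin n),
        (if ¬π.SameCycle x y
          then (if Function.minimalPeriod (⇑π) x ≤ t
                  then ((Function.minimalPeriod (⇑π) x : ℚ))⁻¹ else 0)
              * (if Function.minimalPeriod (⇑π) y ≤ t
                  then ((Function.minimalPeriod (⇑π) y : ℚ))⁻¹ else 0)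
          else 0)
        = ((n - 2).factorial : ℚ) * (∑ ℓ ∈ Finset.Icc 1 t, ((ℓ : ℚ))⁻¹)^2 := by
      intro y hy
      exact sumInnerTwo n t ht2 x y (Ne.symm (Finset.mem_erase.1 hy).1)
    rw [Finset.sum_congr rfl hoff, Finset.sum_const, Finset.card_erase_of_mem
      (Finset.mem_univ x), Finset.card_univ, Fintype.card_fin, nsmul_eq_mul]
  rw [Finset.sum_congr rfl (fun x _ => hinner x), Finset.sum_const, Finset.card_univ,
    Fintype.card_fin, nsmul_eq_mul]
  rw [← mul_assoc, ← mul_assoc, ← Nat.cast_mul, ← Nat.cast_mul]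
  congr 2
  have h1 : (n - 1) * (n - 2).factorial = (n - 1).factorial := by
    have := Nat.mul_factorial_pred (n := n - 1) (by omega)
    simpa [Nat.sub_sub] using this
  rw [mul_assoc, h1]
  exact Nat.mul_factorial_pred (by omega)
/-- For `X` the number of cycles of length at most `t ≤ n/2` in a uniformly random
permutation of `[n]`, `Var(X) ≤ E[X]`. -/
theorem stmt6 (n t : ℕ) (ht : 2 * t ≤ n) :
    (∑ π : Equiv.Perm (Fin n), (orbitCountLe n t π : ℚ) ^ 2) / (n.factorial : ℚ)
      - ((∑ π : Equiv.Perm (Fin n), (orbitCountLe n t π : ℚ)) / (n.factorial : ℚ)) ^ 2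
      ≤ (∑ π : Equiv.Perm (Fin n), (orbitCountLe n t π : ℚ)) / (n.factorial : ℚ) := by
  have hn0 : ((n.factorial : ℚ)) ≠ 0 := Nat.cast_ne_zero.2 (Nat.factorial_ne_zero n)
  have h1 := sum1 n t ht
  have h2 := sum2 n t ht
  have h2' : ∑ π : Equiv.Perm (Fin n), (orbitCountLe n t π : ℚ) ^ 2
      = ∑ π : Equiv.Perm (Fin n), (orbitCountLe n t π : ℚ)^2 := rfl
  rw [h1, h2' , h2, add_div, mul_div_cancel_left₀ _ hn0, mul_div_cancel_left₀ _ hn0]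
  linarith
end

section
/- Let v₁, …, vₙ be distinct vertices of a graph H in a fixed linear order, and suppose u₁ < … < u_ℓ is a special sequence, meaning u_i u_{i+1}⁺ ∈ E(H) for all i ∈ [ℓ−1], where w⁺ denotes the successor of w in the order. If P = v₁v₂…vₙ is a path of H (consecutive vertices in the order are adjacent) with u₁ = v₁ and u_ℓ = vₙ, then H contains a Hamiltonian path on {v₁,…,vₙ} from u_ℓ⁻ = v_{n−1} to u_ℓ = vₙ. -/
namespace Stmt14Aux

open List

def RL (c : ℕ → ℕ) : ℕ → List ℕ
  | 0 => [0]
  | 1 => List.range' 0 (c 1 + 1)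
  | (k+2) => (List.range' (c k + 1) (c (k+1) - c k)).reverse
      ++ (RL c k ++ List.range' (c (k+1) + 1) (c (k+2) - c (k+1)))

lemma chain'_range' (r : ℕ → ℕ → Prop) : ∀ (len a : ℕ),
    (∀ j, a ≤ j → j + 2 ≤ a + len → r j (j+1)) → List.Chain' r (List.range' a len)
  | 0, a, _ => by simp [List.Chain']
  | 1, a, _ => by simp [List.Chain']
  | (len+2), a, h => by
    rw [List.range'_succ, List.range'_succ, List.Chain', List.isChain_cons_cons]
    refine ⟨h a le_rfl (by omega), ?_⟩
    rw [← List.range'_succ]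
    exact chain'_range' r (len+1) (a+1) (fun j hj hj2 => h j (by omega) (by omega))

lemma RL_mem (c : ℕ → ℕ) (hc0 : c 0 = 0) :
    ∀ k, (∀ i, i < k → c i < c (i+1)) → ∀ x, (x ∈ RL c k ↔ x ≤ c k)
  | 0, _, x => by simp [RL, hc0]
  | 1, _, x => by simp [RL, Nat.lt_succ_iff]
  | (k+2), hm, x => by
      have h1 : c k < c (k+1) := hm k (by omega)
      have h2 : c (k+1) < c (k+2) := hm (k+1) (by omega)
      have ih := RL_mem c hc0 k (fun i hi => hm i (by omega))
      simp only [RL, List.mem_append, List.mem_reverse, List.mem_range'_1, ih]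
      omega

lemma RL_head? (c : ℕ → ℕ) (hc0 : c 0 = 0) :
    ∀ k, (∀ i, i < k → c i < c (i+1)) → (RL c k).head? = some (c (k-1))
  | 0, _ => by simp [RL, hc0]
  | 1, _ => by simp [RL, List.head?_range', hc0]
  | (k+2), hm => by
      have h1 : c k < c (k+1) := hm k (by omega)
      show (RL c (k+2)).head? = some (c (k+1))
      simp only [RL, List.head?_append, List.head?_reverse, List.getLast?_range',
        if_neg (by omega : ¬ c (k+1) - c k = 0), Option.some_or, Option.some_inj]
      omega

lemma RL_getLast? (c : ℕ → ℕ) (hc0 : c 0 = 0) :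
    ∀ k, (∀ i, i < k → c i < c (i+1)) → (RL c k).getLast? = some (c k)
  | 0, _ => by simp [RL, hc0]
  | 1, _ => by simp [RL, List.getLast?_range']
  | (k+2), hm => by
      have h2 : c (k+1) < c (k+2) := hm (k+1) (by omega)
      simp only [RL, List.getLast?_append, List.getLast?_range',
        if_neg (by omega : ¬ c (k+2) - c (k+1) = 0), Option.some_or, Option.some_inj]
      omega

lemma RL_nodup (c : ℕ → ℕ) (hc0 : c 0 = 0) :
    ∀ k, (∀ i, i < k → c i < c (i+1)) → (RL c k).Nodup
  | 0, _ => by simp [RL]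
  | 1, _ => by simpa [RL] using List.nodup_range'
  | (k+2), hm => by
      have h1 : c k < c (k+1) := hm k (by omega)
      have h2 : c (k+1) < c (k+2) := hm (k+1) (by omega)
      have ih := RL_nodup c hc0 k (fun i hi => hm i (by omega))
      have hmem := RL_mem c hc0 k (fun i hi => hm i (by omega))
      simp only [RL, List.nodup_append, List.nodup_reverse, List.disjoint_left,
        List.mem_append, List.mem_reverse, List.mem_range'_1, hmem]
      refine ⟨List.nodup_range', ⟨ih, List.nodup_range', ?_⟩, ?_⟩
      · intro a ha; omega
      · intro a ha; omega

lemma RL_chain (c : ℕ → ℕ) (hc0 : c 0 = 0) (r : ℕ → ℕ → Prop) :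
    ∀ k, (∀ i, i < k → c i < c (i+1)) →
    (∀ j, j + 1 ≤ c k → r j (j+1)) →
    (∀ j, j + 1 ≤ c k → r (j+1) j) →
    (∀ j, 1 ≤ j → j + 2 ≤ k → r (c j + 1) (c (j-1))) →
    (∀ j, j + 2 ≤ k → r (c j) (c (j+1) + 1)) →
    List.Chain' r (RL c k)
  | 0, _, _, _, _, _ => List.isChain_singleton _
  | 1, hm, hr1, _, _, _ => by
      refine chain'_range' r (c 1 + 1) 0 (fun j hj hj2 => hr1 j (by omega))
  | (k+2), hm, hr1, hr2, hr3, hr4 => by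
      have h1 : c k < c (k+1) := hm k (by omega)
      have h2 : c (k+1) < c (k+2) := hm (k+1) (by omega)
      have hck2 : c k ≤ c (k+2) := by omega
      have ih := RL_chain c hc0 r k (fun i hi => hm i (by omega))
        (fun j hj => hr1 j (by omega)) (fun j hj => hr2 j (by omega))
        (fun j h1j h2j => hr3 j h1j (by omega)) (fun j hj => hr4 j (by omega))
      have hhead := RL_head? c hc0 k (fun i hi => hm i (by omega))
      have hlast := RL_getLast? c hc0 k (fun i hi => hm i (by omega))
      refine List.IsChain.append ?_ (List.IsChain.append ih ?_ ?_) ?_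
      · rw [List.isChain_reverse]
        refine chain'_range' _ _ _ (fun j hj hj2 => hr2 j (by omega))
      · refine chain'_range' _ _ _ (fun j hj hj2 => hr1 j (by omega))
      · intro x hx y hy
        rw [hlast] at hx
        rw [List.head?_range', if_neg (by omega : ¬ c (k+2) - c (k+1) = 0)] at hy
        obtain rfl : c k = x := by simpa using hx
        obtain rfl : c (k+1) + 1 = y := by simpa using hy
        exact hr4 k (by omega)
      · intro x hx y hy
        rw [List.getLast?_reverse, List.head?_range',
          if_neg (by omega : ¬ c (k+1) - c k = 0)] at hx
        rw [List.head?_append, hhead, Option.some_or] at hy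
        obtain rfl : c k + 1 = x := by simpa using hx
        obtain rfl : c (k-1) = y := by simpa using hy
        rcases Nat.eq_zero_or_pos k with rfl | hk
        · have : r (0 + 1) 0 := hr2 0 (by omega)
          simpa [hc0] using this
        · exact hr3 k hk (by omega)

lemma exists_walk {V : Type*} (H : SimpleGraph V) :
    ∀ (M : List V) (a b : V), List.Chain H.Adj a M →
      (a :: M).getLast (List.cons_ne_nil _ _) = b →
      ∃ w : H.Walk a b, w.support = a :: M
  | [], a, b, _, hb => by
      obtain rfl : a = b := by simpa using hb
      exact ⟨SimpleGraph.Walk.nil, rfl⟩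
  | (x :: M), a, b, hch, hb => by
      rw [List.Chain, List.isChain_cons_cons] at hch
      obtain ⟨hadj, hch'⟩ := hch
      have hb' : (x :: M).getLast (List.cons_ne_nil _ _) = b := by
        rw [← hb]; exact (List.getLast_cons (List.cons_ne_nil _ _)).symm
      obtain ⟨w, hw⟩ := exists_walk H M x b hch' hb'
      exact ⟨SimpleGraph.Walk.cons hadj w, by simp [hw]⟩

lemma assemble {V : Type*} (H : SimpleGraph V) (v : ℕ → V) (n : ℕ) (L : List ℕ)
    (hch : List.Chain' (fun a b => H.Adj (v a) (v b)) L)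
    (hnd : L.Nodup) (hmem : ∀ x, x ∈ L ↔ x < n)
    (hinj : ∀ j, j < n → ∀ k, k < n → v j = v k → j = k)
    (hh : L.head? = some (n-2)) (hl : L.getLast? = some (n-1)) :
    ∃ p : H.Walk (v (n-2)) (v (n-1)), p.IsPath ∧
      {x | x ∈ p.support} = {x | ∃ j < n, v j = x} := by
  obtain ⟨a, L', rfl⟩ : ∃ a L', L = a :: L' := by
    cases L with
    | nil => simp at hh
    | cons a L' => exact ⟨a, L', rfl⟩
  obtain rfl : a = n - 2 := by simpa using hh
  have hchain : List.Chain H.Adj (v (n-2)) (L'.map v) := by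
    refine (List.isChain_map (l := (n-2) :: L') v).2 ?_
    exact hch
  have hlastv : ((v (n-2)) :: L'.map v).getLast (List.cons_ne_nil _ _) = v (n-1) := by
    have h1 : ((v (n-2)) :: L'.map v).getLast? = some (v (n-1)) := by
      have : (v (n-2)) :: L'.map v = (((n-2) :: L').map v) := rfl
      rw [this, List.getLast?_map, hl]; rfl
    rwa [List.getLast?_eq_getLast (List.cons_ne_nil _ _), Option.some_inj] at h1
  obtain ⟨w, hw⟩ := exists_walk H (L'.map v) (v (n-2)) (v (n-1)) hchain hlastv
  refine ⟨w, ?_, ?_⟩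
  · rw [SimpleGraph.Walk.isPath_def, hw]
    have : (v (n-2)) :: L'.map v = (((n-2) :: L').map v) := rfl
    rw [this]
    refine List.Nodup.map_on ?_ hnd
    intro x hx y hy hxy
    exact hinj x ((hmem x).1 hx) y ((hmem y).1 hy) hxy
  · ext x
    simp only [Set.mem_setOf_eq, hw]
    constructor
    · intro hx
      have : x ∈ (((n-2) :: L').map v) := hx
      obtain ⟨j, hj, rfl⟩ := List.mem_map.1 this
      exact ⟨j, (hmem j).1 hj, rfl⟩
    · rintro ⟨j, hj, rfl⟩
      have : v j ∈ (((n-2) :: L').map v) := List.mem_map.2 ⟨j, (hmem j).2 hj, rfl⟩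
      exact this

end Stmt14Aux

open Stmt14Aux in
theorem stmt14' {V : Type*} (H : SimpleGraph V) (n ℓ : ℕ) (hn : 2 ≤ n) (hℓ : 2 ≤ ℓ)
    (v : ℕ → V) (hinj : ∀ j < n, ∀ k < n, v j = v k → j = k)
    (hpath : ∀ j, j + 1 < n → H.Adj (v j) (v (j + 1)))
    (c : ℕ → ℕ) (hmono : StrictMonoOn c (Set.Iio ℓ)) (hc0 : c 0 = 0)
    (hclast : c (ℓ - 1) = n - 1)
    (hchord : ∀ i, i + 1 < ℓ → H.Adj (v (c i)) (v (min (c (i + 1) + 1) (n - 1)))) :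
    ∃ p : H.Walk (v (n - 2)) (v (n - 1)), p.IsPath ∧
      {x | x ∈ p.support} = {x | ∃ j < n, v j = x} := by
  classical
  have hmono' : ∀ i j, i < j → j ≤ ℓ - 1 → c i < c j := by
    intro i j hij hj
    exact hmono (by simp only [Set.mem_Iio]; omega) (by simp only [Set.mem_Iio]; omega) hij
  by_cases hn2 : n = 2
  · subst hn2
    refine ⟨SimpleGraph.Walk.cons (hpath 0 (by omega)) SimpleGraph.Walk.nil, ?_, ?_⟩
    · rw [SimpleGraph.Walk.isPath_def]
      simpa using (hpath 0 (by omega)).ne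
    · ext x
      simp only [Set.mem_setOf_eq, SimpleGraph.Walk.support_cons,
        SimpleGraph.Walk.support_nil, List.mem_cons, List.mem_singleton]
      constructor
      · rintro (rfl | rfl | h)
        exacts [⟨0, by omega, rfl⟩, ⟨1, by omega, rfl⟩, (by simp at h)]
      · rintro ⟨j, hj, rfl⟩
        interval_cases j
        · exact Or.inl rfl
        · exact Or.inr (Or.inl rfl)
  have hn3 : 3 ≤ n := by omega
  have hclast2 : c (ℓ - 2) < n - 1 := by
    have := hmono' (ℓ-2) (ℓ-1) (by omega) le_rfl
    omega
  obtain ⟨k, hk2, hkc, hlastc⟩ :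
      ∃ k, k + 2 ≤ ℓ ∧ c k + 1 ≤ n - 2 ∧ H.Adj (v (c k)) (v (n-1)) := by
    by_cases hA : c (ℓ - 2) + 1 ≤ n - 2
    · refine ⟨ℓ - 2, by omega, hA, ?_⟩
      have h := hchord (ℓ - 2) (by omega)
      rw [show ℓ - 2 + 1 = ℓ - 1 by omega, hclast,
        show min (n - 1 + 1) (n - 1) = n - 1 by omega] at h
      exact h
    · have hceq : c (ℓ - 2) = n - 2 := by omega
      have hl3 : 3 ≤ ℓ := by
        rcases Nat.lt_or_ge ℓ 3 with h | h
        · exfalso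
          have hl2 : ℓ = 2 := by omega
          rw [hl2] at hceq
          simp only [show (2:ℕ) - 2 = 0 from rfl, hc0] at hceq
          omega
        · exact h
      refine ⟨ℓ - 3, by omega, ?_, ?_⟩
      · have := hmono' (ℓ-3) (ℓ-2) (by omega) (by omega)
        omega
      · have h := hchord (ℓ - 3) (by omega)
        rw [show ℓ - 3 + 1 = ℓ - 2 by omega, hceq,
          show min (n - 2 + 1) (n - 1) = n - 1 by omega] at h
        exact h
  have hm_k : ∀ i, i < k → c i < c (i+1) := by
    intro i hi
    exact hmono' i (i+1) (by omega) (by omega)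
  have hckbound : c k ≤ n - 3 := by omega
  have hjun : H.Adj (v (c k + 1)) (v (c (k - 1))) := by
    rcases Nat.eq_zero_or_pos k with rfl | hk
    · have h := (hpath 0 (by omega)).symm
      simpa [hc0] using h
    · have h := hchord (k - 1) (by omega)
      rw [show k - 1 + 1 = k by omega,
        show min (c k + 1) (n - 1) = c k + 1 by omega] at h
      exact h.symm
  have hcmono_le : ∀ i j, i ≤ j → j ≤ k → c i ≤ c j := by
    intro i j hij hj
    rcases Nat.eq_or_lt_of_le hij with rfl | h
    · exact le_rfl
    · exact (hmono' i j h (by omega)).le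
  set L : List ℕ :=
    (List.range' (c k + 1) (n - 2 - c k)).reverse ++ (RL c k ++ [n - 1]) with hL
  have hmemRL := RL_mem c hc0 k hm_k
  have hheadRL := RL_head? c hc0 k hm_k
  have hlastRL := RL_getLast? c hc0 k hm_k
  have hchL : List.Chain' (fun a b => H.Adj (v a) (v b)) L := by
    refine List.IsChain.append ?_ (List.IsChain.append ?_ ?_ ?_) ?_
    · rw [List.isChain_reverse]
      refine chain'_range' _ _ _ (fun j hj hj2 => ?_)
      exact (hpath j (by omega)).symm
    · refine RL_chain c hc0 _ k hm_k ?_ ?_ ?_ ?_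
      · intro j hj
        exact hpath j (by omega)
      · intro j hj
        exact (hpath j (by omega)).symm
      · intro j h1j h2j
        have hcj : c j ≤ c k := hcmono_le j k (by omega) le_rfl
        have h := hchord (j - 1) (by omega)
        rw [show j - 1 + 1 = j by omega,
          show min (c j + 1) (n - 1) = c j + 1 by omega] at h
        exact h.symm
      · intro j hj
        have hcj : c (j+1) ≤ c k := hcmono_le (j+1) k (by omega) le_rfl
        have h := hchord j (by omega)
        rw [show min (c (j+1) + 1) (n - 1) = c (j+1) + 1 by omega] at h
        exact h
    · exact List.isChain_singleton _
    · intro x hx y hy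
      rw [hlastRL] at hx
      obtain rfl : c k = x := by simpa using hx
      obtain rfl : n - 1 = y := by simpa using hy
      exact hlastc
    · intro x hx y hy
      rw [List.getLast?_reverse, List.head?_range',
        if_neg (by omega : ¬ n - 2 - c k = 0)] at hx
      rw [List.head?_append, hheadRL, Option.some_or] at hy
      obtain rfl : c k + 1 = x := by simpa using hx
      obtain rfl : c (k-1) = y := by simpa using hy
      exact hjun
  have hndL : L.Nodup := by
    simp only [hL, List.nodup_append, List.nodup_reverse, List.disjoint_left,
      List.mem_append, List.mem_reverse, List.mem_range'_1, hmemRL,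
      List.mem_singleton, List.nodup_singleton]
    refine ⟨List.nodup_range', ⟨RL_nodup c hc0 k hm_k, trivial, ?_⟩, ?_⟩ <;>
      · intro a ha
        omega
  have hmemL : ∀ x, x ∈ L ↔ x < n := by
    intro x
    simp only [hL, List.mem_append, List.mem_reverse, List.mem_range'_1, hmemRL,
      List.mem_singleton]
    omega
  have hhL : L.head? = some (n - 2) := by
    rw [hL, List.head?_append, List.head?_reverse, List.getLast?_range',
      if_neg (by omega : ¬ n - 2 - c k = 0), Option.some_or, Option.some_inj]
    omega
  have hlL : L.getLast? = some (n - 1) := by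
    simp [hL]
  exact assemble H v n L hchL hndL hmemL hinj hhL hlL


/-- Let `v 0, …, v (n-1)` be distinct vertices of `H` forming a path in this order, and
let `c 0 < … < c (ℓ-1)` be the indices of a special sequence: `v (c 0) = v 0`,
`v (c (ℓ-1)) = v (n-1)`, and for each `i`, `v (c i)` is adjacent to the successor of
`v (c (i+1))` in the order (successor saturating at the last vertex).  Then `H` contains
a Hamiltonian path on `{v 0, …, v (n-1)}` from `v (n-2)` to `v (n-1)`. -/
theorem stmt14 {V : Type*} (H : SimpleGraph V) (n ℓ : ℕ) (hn : 2 ≤ n) (hℓ : 2 ≤ ℓ)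
    (v : ℕ → V) (hinj : ∀ j < n, ∀ k < n, v j = v k → j = k)
    (hpath : ∀ j, j + 1 < n → H.Adj (v j) (v (j + 1)))
    (c : ℕ → ℕ) (hmono : StrictMonoOn c (Set.Iio ℓ)) (hc0 : c 0 = 0)
    (hclast : c (ℓ - 1) = n - 1)
    (hchord : ∀ i, i + 1 < ℓ → H.Adj (v (c i)) (v (min (c (i + 1) + 1) (n - 1)))) :
    ∃ p : H.Walk (v (n - 2)) (v (n - 1)), p.IsPath ∧
      {x | x ∈ p.support} = {x | ∃ j < n, v j = x} :=
  stmt14' H n ℓ hn hℓ v hinj hpath c hmono hc0 hclast hchord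
end

section
/- Every regular graph of even degree contains a spanning subgraph that is 2-regular (a 2-factor). -/
open Finset Function


lemma aux_fpf_involution (α : Type*) [Fintype α] [DecidableEq α]
    (h : Even (Fintype.card α)) :
    ∃ φ : α → α, Function.Involutive φ ∧ ∀ a, φ a ≠ a := by
  obtain ⟨m, hm⟩ := h
  have hc : Fintype.card α = Fintype.card (Fin m × Bool) := by
    simp [hm, Fintype.card_prod, two_mul]; omega
  let e := Fintype.equivOfCardEq hc
  refine ⟨fun a => e.symm ((e a).1, !(e a).2), fun a => by simp, fun a h => ?_⟩
  apply_fun e at h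
  rw [Equiv.apply_symm_apply] at h
  have := congrArg Prod.snd h
  simp at this

lemma aux_fpf_involution_fiber {α V : Type*} [Fintype α] [DecidableEq α] [DecidableEq V]
    (c : α → V) (h : ∀ v, Even (Fintype.card {a // c a = v})) :
    ∃ φ : α → α, Function.Involutive φ ∧ (∀ a, φ a ≠ a) ∧ ∀ a, c (φ a) = c a := by
  classical
  have key : ∀ v, ∃ ψ : {a // c a = v} → {a // c a = v},
      Function.Involutive ψ ∧ ∀ x, ψ x ≠ x := fun v => aux_fpf_involution _ (h v)
  choose ψ hψi hψf using key
  let F : V → α → α := fun v a => if h : c a = v then (ψ v ⟨a, h⟩ : _).1 else a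
  have hF : ∀ (v : V) (a : α) (h : c a = v), F v a = (ψ v ⟨a, h⟩ : _).1 := by
    intro v a h
    simp only [F, dif_pos h]
  have hFc : ∀ a, c (F (c a) a) = c a := by
    intro a
    rw [hF (c a) a rfl]
    exact (ψ (c a) ⟨a, rfl⟩).2
  refine ⟨fun a => F (c a) a, ?_, ?_, hFc⟩
  · intro a
    show F (c (F (c a) a)) (F (c a) a) = a
    have h2 : c (F (c a) a) = c a := hFc a
    rw [h2, hF (c a) a rfl, hF (c a) _ ((ψ (c a) ⟨a, rfl⟩).2), Subtype.coe_eta,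
      hψi (c a) ⟨a, rfl⟩]
  · intro a h
    have h' : F (c a) a = a := h
    rw [hF (c a) a rfl] at h'
    exact hψf (c a) ⟨a, rfl⟩ (Subtype.ext h')



/-- Every regular graph of even degree `2k` (with `k ≥ 1`) contains a spanning
`2`-regular subgraph (a `2`-factor). -/
theorem stmt16 {V : Type*} [Fintype V] [DecidableEq V] (G : SimpleGraph V)
    [DecidableRel G.Adj] (k : ℕ) (hk : 1 ≤ k) (hreg : G.IsRegularOfDegree (2 * k)) :
    ∃ H : SimpleGraph V, H ≤ G ∧ ∀ v, Nat.card (H.neighborSet v) = 2 := by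
  classical
  -- even fibers of darts over their first vertex
  have hfib : ∀ v : V, Even (Fintype.card {d : G.Dart // d.fst = v}) := by
    intro v
    have h1 : Fintype.card {d : G.Dart // d.fst = v} = G.degree v := by
      rw [Fintype.card_subtype]
      exact G.dart_fst_fiber_card_eq_degree v
    rw [h1, hreg v]
    exact ⟨k, two_mul k⟩
  obtain ⟨Φ, hΦ_inv, hΦ_ne, hΦ_fst⟩ :=
    aux_fpf_involution_fiber (fun d : G.Dart => d.fst) hfib
  -- permutations of darts
  let ρ : Equiv.Perm G.Dart := SimpleGraph.Dart.symm_involutive.toPerm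
  have hρ_apply : ∀ d : G.Dart, ρ d = d.symm := fun d => rfl
  have hρ_ne : ∀ d, ρ d ≠ d := fun d => d.symm_ne
  have hρρ : ∀ d, ρ (ρ d) = d := fun d => d.symm_symm
  have hρ_inv : ρ⁻¹ = ρ := rfl
  let Φp : Equiv.Perm G.Dart := hΦ_inv.toPerm
  have hΦp_apply : ∀ d, Φp d = Φ d := fun d => rfl
  have hΦ_inv' : Φp⁻¹ = Φp := rfl
  let σ : Equiv.Perm G.Dart := Φp * ρ
  have hσ_apply : ∀ d : G.Dart, σ d = Φ d.symm := fun d => rfl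
  have hσ_fst : ∀ d : G.Dart, (σ d).fst = d.snd := by
    intro d
    rw [hσ_apply, hΦ_fst]
    rfl
  have hσinv : σ⁻¹ = ρ * Φp := by
    rw [mul_inv_rev, hρ_inv, hΦ_inv']
  have hσinv_snd : ∀ d : G.Dart, (σ⁻¹ d).snd = d.fst := by
    intro d
    rw [hσinv]
    show ((Φ d : G.Dart).symm).snd = d.fst
    rw [SimpleGraph.Dart.symm]
    show (Φ d : G.Dart).fst = d.fst
    exact hΦ_fst d
  have hrel : ρ * σ * ρ = σ⁻¹ := by
    rw [hσinv]
    show ρ * (Φp * ρ) * ρ = ρ * Φp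
    have hρρ1 : ρ * ρ = 1 := by rw [← hρ_inv]; exact inv_mul_cancel ρ
    calc ρ * (Φp * ρ) * ρ = ρ * Φp * (ρ * ρ) := by group
    _ = ρ * Φp := by rw [hρρ1, mul_one]
  have hρρ1 : ρ * ρ = 1 := by rw [← hρ_inv]; exact inv_mul_cancel ρ
  have hconj : ∀ m : ℤ, ρ * σ ^ m * ρ = σ ^ (-m) := by
    intro m
    have h1 : ρ * σ ^ m * ρ = (MulAut.conj ρ) (σ ^ m) := by
      simp [MulAut.conj_apply, hρ_inv, mul_assoc]
    rw [h1, map_zpow]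
    have h2 : (MulAut.conj ρ) σ = σ⁻¹ := by
      simp [MulAut.conj_apply, hρ_inv, ← mul_assoc, hrel]
    rw [h2, inv_zpow, zpow_neg]
  have hconj' : ∀ (m : ℤ) (d : G.Dart), ρ ((σ ^ m) d) = (σ ^ (-m)) (ρ d) := by
    intro m d
    have := congrFun (congrArg (fun (π : Equiv.Perm G.Dart) => (π : G.Dart → G.Dart)) (hconj m)) (ρ d)
    simpa [Equiv.Perm.mul_apply, hρρ d] using this
  have hτ_ne : ∀ d, σ d ≠ ρ d := by
    intro d h
    exact hΦ_ne d.symm h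
  have hkey : ∀ (m : ℤ) (d : G.Dart), (σ ^ m) d ≠ ρ d := by
    intro m d h
    rcases Int.even_or_odd m with ⟨j, hj⟩ | ⟨j, hj⟩
    · apply hρ_ne ((σ ^ j) d)
      have h1 : ρ ((σ ^ j) d) = (σ ^ (-j)) (ρ d) := hconj' j d
      rw [h1, ← h, ← Equiv.Perm.mul_apply, ← zpow_add,
        show -j + m = j by omega]
    · apply hτ_ne ((σ ^ j) d)
      have h1 : ρ ((σ ^ (j + 1)) d) = (σ ^ (-(j + 1))) (ρ d) := hconj' (j + 1) d
      have h2 : (σ ^ (-(j + 1))) (ρ d) = (σ ^ j) d := by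
        rw [← h]
        rw [← Equiv.Perm.mul_apply, ← zpow_add, show -(j + 1) + m = j by omega]
      have h3 : (σ ^ (j + 1)) d = ρ ((σ ^ j) d) := by
        rw [← hρρ ((σ ^ (j + 1)) d), h1, h2]
      have h4 : (σ ^ (j + 1)) d = σ ((σ ^ j) d) := by
        rw [show j + 1 = 1 + j by ring, zpow_one_add, Equiv.Perm.mul_apply]
      rw [← h4, h3]
  -- orbit selection
  let rk : G.Dart → ℕ := fun d => (Fintype.equivFin G.Dart d : ℕ)
  have hrk_inj : Function.Injective rk := by
    intro a b h
    have := Fin.val_injective h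
    exact (Fintype.equivFin G.Dart).injective this
  let cls : G.Dart → Finset G.Dart := fun d => univ.filter (fun e => σ.SameCycle d e)
  have hmem_cls : ∀ d e, e ∈ cls d ↔ σ.SameCycle d e := by
    intro d e; simp [cls]
  have hcls_ne : ∀ d, (cls d).Nonempty := fun d => ⟨d, (hmem_cls d d).mpr (Equiv.Perm.SameCycle.refl σ d)⟩
  let m : G.Dart → ℕ := fun d => ((cls d).image rk).min' ((hcls_ne d).image rk)
  have hcls_eq : ∀ d e, σ.SameCycle d e → cls d = cls e := by
    intro d e h
    ext x
    rw [hmem_cls, hmem_cls]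
    exact ⟨fun hx => h.symm.trans hx, fun hx => h.trans hx⟩
  have hm_sc : ∀ d e, σ.SameCycle d e → m d = m e := by
    intro d e h
    simp only [m, hcls_eq d e h]
  have hm_mem : ∀ d, ∃ e ∈ cls d, rk e = m d := by
    intro d
    have := Finset.min'_mem ((cls d).image rk) ((hcls_ne d).image rk)
    rw [Finset.mem_image] at this
    obtain ⟨e, he, hre⟩ := this
    exact ⟨e, he, hre⟩
  have hnsc : ∀ d, ¬ σ.SameCycle d (ρ d) := by
    rintro d ⟨i, hi⟩
    exact hkey i d hi
  have hm_ne : ∀ d, m d ≠ m (ρ d) := by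
    intro d h
    obtain ⟨e, he, hre⟩ := hm_mem d
    obtain ⟨e', he', hre'⟩ := hm_mem (ρ d)
    have : e = e' := hrk_inj (by rw [hre, hre', h])
    subst this
    exact hnsc d (((hmem_cls d e).mp he).trans ((hmem_cls (ρ d) e).mp he').symm)
  let D : Finset G.Dart := univ.filter (fun d => m d < m (ρ d))
  have hmem_D : ∀ d, d ∈ D ↔ m d < m (ρ d) := by intro d; simp [D]
  have hD_xor : ∀ d : G.Dart, (d ∈ D ∧ ρ d ∉ D) ∨ (d ∉ D ∧ ρ d ∈ D) := by
    intro d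
    rcases lt_or_gt_of_ne (hm_ne d) with h | h
    · left
      constructor
      · exact (hmem_D d).mpr h
      · rw [hmem_D, hρρ d]
        omega
    · right
      constructor
      · rw [hmem_D]; omega
      · rw [hmem_D, hρρ d]
        omega
  have hD_sigma : ∀ d : G.Dart, d ∈ D ↔ σ d ∈ D := by
    intro d
    have h1 : m (σ d) = m d := (hm_sc d (σ d) ⟨1, by rw [zpow_one]⟩).symm
    have h2 : ρ (σ d) = σ⁻¹ (ρ d) := by
      have := congrFun (congrArg (fun (π : Equiv.Perm G.Dart) => (π : G.Dart → G.Dart)) hrel) (ρ d)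
      simp only [Equiv.Perm.mul_apply, hρρ d] at this
      exact this
    have h3 : m (ρ (σ d)) = m (ρ d) := by
      rw [h2]
      exact (hm_sc (ρ d) (σ⁻¹ (ρ d)) ⟨-1, by rw [zpow_neg_one]⟩).symm
    rw [hmem_D, hmem_D, h1, h3]
  -- degree counting
  have hdart_ne : ∀ d : G.Dart, d.fst ≠ d.snd := fun d => G.ne_of_adj d.adj
  let outD : V → Finset G.Dart := fun v => D.filter (fun d => d.fst = v)
  let inD : V → Finset G.Dart := fun v => D.filter (fun d => d.snd = v)
  have hout_in : ∀ v, (outD v).card = (inD v).card := by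
    intro v
    apply Finset.card_bij' (fun d _ => σ⁻¹ d) (fun d _ => σ d)
    · intro d hd
      simp only [outD, Finset.mem_filter] at hd
      simp only [inD, Finset.mem_filter]
      refine ⟨?_, ?_⟩
      · have := (hD_sigma (σ⁻¹ d))
        rw [show σ (σ⁻¹ d) = d from σ.apply_symm_apply d] at this
        exact this.mpr hd.1
      · rw [hσinv_snd d, hd.2]
    · intro d hd
      simp only [inD, Finset.mem_filter] at hd
      simp only [outD, Finset.mem_filter]
      exact ⟨(hD_sigma d).mp hd.1, by rw [hσ_fst d, hd.2]⟩
    · intro d _; exact σ.apply_symm_apply d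
    · intro d _; exact σ.symm_apply_apply d
  have hD_edge : ∀ d : G.Dart, d ∈ D → d.symm ∈ D → False := by
    intro d hd hds
    rcases hD_xor d with ⟨_, h2⟩ | ⟨h1, _⟩
    · exact h2 (by rw [hρ_apply]; exact hds)
    · exact h1 hd
  have hsum : ∀ v, (outD v).card + (inD v).card = 2 * k := by
    intro v
    have hdisj : Disjoint (outD v) (inD v) := by
      rw [Finset.disjoint_filter]
      intro d _ h1 h2
      exact hdart_ne d (h1.trans h2.symm)
    rw [← Finset.card_union_of_disjoint hdisj]
    have hunion : outD v ∪ inD v = D.filter (fun d => d.fst = v ∨ d.snd = v) := by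
      rw [Finset.filter_or]
    rw [hunion]
    have hcard : (D.filter (fun d => d.fst = v ∨ d.snd = v)).card
        = (G.neighborFinset v).card := by
      apply Finset.card_bij (fun d _ => if d.fst = v then d.snd else d.fst)
      · intro d hd
        simp only [Finset.mem_filter] at hd
        rw [SimpleGraph.mem_neighborFinset]
        rcases hd.2 with h | h
        · rw [if_pos h, ← h]
          exact d.adj
        · have hne : d.fst ≠ v := fun hc => hdart_ne d (hc.trans h.symm)
          rw [if_neg hne, ← h]
          exact d.adj.symm
      · intro d1 hd1 d2 hd2 heq
        simp only [Finset.mem_filter] at hd1 hd2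
        by_cases h1 : d1.fst = v <;> by_cases h2 : d2.fst = v
        · rw [if_pos h1, if_pos h2] at heq
          exact SimpleGraph.Dart.ext d1 d2 (Prod.ext (h1.trans h2.symm) heq)
        · rw [if_pos h1, if_neg h2] at heq
          have hs2 : d2.snd = v := hd2.2.resolve_left h2
          exfalso
          apply hD_edge d1 hd1.1
          have : d2 = d1.symm := by
            apply SimpleGraph.Dart.ext
            show d2.toProd = (d1.toProd.2, d1.toProd.1)
            exact Prod.ext (heq.symm) (hs2.trans h1.symm)
          rw [← this]
          exact hd2.1
        · rw [if_neg h1, if_pos h2] at heq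
          have hs1 : d1.snd = v := hd1.2.resolve_left h1
          exfalso
          apply hD_edge d2 hd2.1
          have : d1 = d2.symm := by
            apply SimpleGraph.Dart.ext
            exact Prod.ext heq (hs1.trans h2.symm)
          rw [← this]
          exact hd1.1
        · rw [if_neg h1, if_neg h2] at heq
          have hs1 : d1.snd = v := hd1.2.resolve_left h1
          have hs2 : d2.snd = v := hd2.2.resolve_left h2
          exact SimpleGraph.Dart.ext d1 d2 (Prod.ext heq (hs1.trans hs2.symm))
      · intro w hw
        rw [SimpleGraph.mem_neighborFinset] at hw
        let d0 : G.Dart := ⟨(v, w), hw⟩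
        rcases hD_xor d0 with ⟨h1, _⟩ | ⟨_, h2⟩
        · refine ⟨d0, Finset.mem_filter.mpr ⟨h1, Or.inl rfl⟩, ?_⟩
          rw [if_pos rfl]
        · rw [hρ_apply] at h2
          refine ⟨d0.symm, Finset.mem_filter.mpr ⟨h2, Or.inr rfl⟩, ?_⟩
          have : (d0.symm).fst ≠ v := fun hc => hw.ne' hc
          rw [if_neg this]
          rfl
    rw [hcard, SimpleGraph.card_neighborFinset_eq_degree, hreg v]
  have houtk : ∀ v, (outD v).card = k := by
    intro v
    have h1 := hsum v
    have h2 := hout_in v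
    omega
  have hink : ∀ v, (inD v).card = k := by
    intro v
    have h1 := hsum v
    have h2 := hout_in v
    omega
  -- Hall's theorem
  let N : V → Finset V := fun v => (outD v).image (fun d => d.snd)
  have hN_mem : ∀ v w, w ∈ N v ↔ ∃ d ∈ D, d.fst = v ∧ d.snd = w := by
    intro v w
    simp only [N, Finset.mem_image, outD, Finset.mem_filter]
    constructor
    · rintro ⟨d, ⟨hd, hfst⟩, hsnd⟩; exact ⟨d, hd, hfst, hsnd⟩
    · rintro ⟨d, hd, hfst, hsnd⟩; exact ⟨d, ⟨hd, hfst⟩, hsnd⟩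
  have hcount : ∀ (S : Finset V) (p : G.Dart → V),
      (∀ v, (D.filter (fun d => p d = v)).card = k) →
      (D.filter (fun d => p d ∈ S)).card = k * S.card := by
    intro S p pD
    rw [Finset.card_eq_sum_card_fiberwise (f := p) (s := D.filter (fun d => p d ∈ S)) (t := S)
      (fun d hd => (Finset.mem_filter.mp hd).2)]
    rw [Finset.sum_congr rfl (fun v hv => ?_), Finset.sum_const, smul_eq_mul, mul_comm]
    rw [Finset.filter_filter, ← pD v]
    congr 1
    apply Finset.filter_congr
    intro d _
    exact ⟨fun h => h.2, fun h => ⟨h ▸ hv, h⟩⟩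
  have hall : ∀ S : Finset V, S.card ≤ (S.biUnion N).card := by
    intro S
    have h1 : (D.filter (fun d => d.fst ∈ S)).card = k * S.card :=
      hcount S (fun d => d.fst) (fun v => houtk v)
    have h2 : (D.filter (fun d => d.snd ∈ S.biUnion N)).card = k * (S.biUnion N).card :=
      hcount _ (fun d => d.snd) (fun v => hink v)
    have hsub : D.filter (fun d => d.fst ∈ S) ⊆ D.filter (fun d => d.snd ∈ S.biUnion N) := by
      intro d hd
      simp only [Finset.mem_filter] at hd ⊢
      refine ⟨hd.1, Finset.mem_biUnion.mpr ⟨d.fst, hd.2, ?_⟩⟩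
      exact (hN_mem d.fst d.snd).mpr ⟨d, hd.1, rfl, rfl⟩
    have hle := Finset.card_le_card hsub
    rw [h1, h2] at hle
    exact Nat.le_of_mul_le_mul_left hle hk
  obtain ⟨f, hf_inj, hf_mem⟩ := (Finset.all_card_le_biUnion_card_iff_exists_injective N).mp hall
  have hf_dart : ∀ v, ∃ d ∈ D, d.fst = v ∧ d.snd = f v := fun v => (hN_mem v (f v)).mp (hf_mem v)
  have hadjf : ∀ v, G.Adj v (f v) := by
    intro v
    obtain ⟨d, _, h1, h2⟩ := hf_dart v
    rw [← h2, ← h1]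
    exact d.adj
  have hf_bij : Function.Bijective f := Finite.injective_iff_bijective.mp hf_inj
  let eq : V ≃ V := Equiv.ofBijective f hf_bij
  let g : V → V := eq.symm
  have hfg : ∀ v, f (g v) = v := fun v => eq.apply_symm_apply v
  have hgf : ∀ v, g (f v) = v := fun v => eq.symm_apply_apply v
  have hne_f : ∀ v, f v ≠ v := fun v => (hadjf v).ne'
  have hfg_ne : ∀ v, f v ≠ g v := by
    intro v h
    obtain ⟨d1, hd1, h11, h12⟩ := hf_dart v
    obtain ⟨d2, hd2, h21, h22⟩ := hf_dart (g v)
    rw [hfg] at h22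
    have hd21 : d2 = d1.symm := by
      apply SimpleGraph.Dart.ext
      show d2.toProd = (d1.toProd.2, d1.toProd.1)
      exact Prod.ext (h21.trans (h.symm.trans h12.symm)) (h22.trans h11.symm)
    exact hD_edge d1 hd1 (hd21 ▸ hd2)
  refine ⟨SimpleGraph.fromRel (fun u w => f u = w), ?_, ?_⟩
  · intro u w hadj
    rw [SimpleGraph.fromRel_adj] at hadj
    rcases hadj with ⟨hne, h | h⟩
    · rw [← h]; exact hadjf u
    · rw [← h]; exact (hadjf w).symm
  · intro v
    have hns : (SimpleGraph.fromRel (fun u w => f u = w)).neighborSet v = {f v, g v} := by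
      ext w
      rw [SimpleGraph.mem_neighborSet, SimpleGraph.fromRel_adj]
      simp only [Set.mem_insert_iff, Set.mem_singleton_iff]
      constructor
      · rintro ⟨hne, h | h⟩
        · left; exact h.symm
        · right; rw [← h, hgf]
      · rintro (rfl | rfl)
        · exact ⟨(hne_f v).symm, Or.inl rfl⟩
        · refine ⟨?_, Or.inr (hfg v)⟩
          intro hc
          exact hne_f v (by nth_rewrite 1 [hc]; exact hfg v)
    rw [hns, Nat.card_coe_set_eq, Set.ncard_pair (hfg_ne v)]
end
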